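/- arXiv:1506.01980 — 3 statements merged into one kernel-verified Lean document; each statement's English description precedes it below -/
import Mathlib

section
/- Fix elements α, β of a commutative ring (or real numbers). For integers n ≥ 0 and r, define the polynomial Z_{n,r}(x) = C(n,r) · Π_{i=r}^{n−1} (xα + β + iαβ) for 0 ≤ r ≤ n (an empty product when r = n, so Z_{n,n}(x) = 1), and Z_{n,r}(x) = 0 when r < 0 or r > n. Then for all n ≥ 0 and all 0 ≤ r ≤ n+1: Z_{n+1,r}(x) = (xα + β + rαβ) · Z_{n,r}(x+β) + Z_{n,r−1}(x+β). -/
open scoped Classical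

noncomputable section

/-- The polynomial `Z_{n,r}(x) = C(n,r) ∏_{i=r}^{n-1} (xα + β + iαβ)` for
`0 ≤ r ≤ n`, and `0` otherwise. -/
def Zpoly {R : Type*} [CommRing R] (a b : R) (n : ℕ) (r : ℤ) (x : R) : R :=
  if 0 ≤ r ∧ r ≤ (n : ℤ) then
    (n.choose r.toNat : R) * ∏ i ∈ Finset.Ico r.toNat n, (x * a + b + (i : R) * a * b)
  else 0

lemma Zshift {R : Type*} [CommRing R] (a b x : R) (m n : ℕ) :
    ∏ i ∈ Finset.Ico m n, ((x + b) * a + b + (i : R) * a * b)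
      = ∏ i ∈ Finset.Ico (m + 1) (n + 1), (x * a + b + (i : R) * a * b) := by
  rw [Finset.prod_Ico_eq_prod_range, Finset.prod_Ico_eq_prod_range]
  simp only [Nat.succ_sub_succ]
  apply Finset.prod_congr rfl
  intro i _
  push_cast
  ring

/-- The polynomials `Z_{n,r}(x)` satisfy the recursion
`Z_{n+1,r}(x) = (xα + β + rαβ)·Z_{n,r}(x+β) + Z_{n,r-1}(x+β)` for all `n ≥ 0`
and all `0 ≤ r ≤ n+1`. -/
theorem Zpoly_recursion {R : Type*} [CommRing R] (a b : R) (n : ℕ) (r : ℤ)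
    (hr0 : 0 ≤ r) (hrn : r ≤ (n : ℤ) + 1) (x : R) :
    Zpoly a b (n + 1) r x =
      (x * a + b + (r : R) * a * b) * Zpoly a b n r (x + b) +
        Zpoly a b n (r - 1) (x + b) := by
  lift r to ℕ using hr0 with m
  have hmn1 : m ≤ n + 1 := by exact_mod_cast hrn
  rcases Nat.lt_or_ge m (n + 1) with hlt | hge
  · -- m ≤ n
    have hmn : m ≤ n := Nat.lt_succ_iff.mp hlt
    rcases Nat.eq_zero_or_pos m with rfl | hmpos
    · -- m = 0
      have h1 : Zpoly a b n (-1 : ℤ) (x + b) = 0 := by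
        simp [Zpoly]
      have h0 : ((0 : ℤ) - 1) = (-1 : ℤ) := by ring
      rw [show ((0:ℕ):ℤ) - 1 = (-1 : ℤ) by norm_num, h1]
      simp only [Zpoly, Int.toNat_natCast]
      rw [if_pos ⟨by positivity, by exact_mod_cast Nat.zero_le (n+1)⟩,
          if_pos ⟨le_refl _, by exact_mod_cast Nat.zero_le n⟩]
      simp only [Nat.choose_zero_right, Nat.cast_one, one_mul, Int.toNat_zero]
      rw [Zshift, Finset.prod_eq_prod_Ico_succ_bot (Nat.succ_pos n)]
      push_cast
      ring
    · -- m = k + 1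
      obtain ⟨k, rfl⟩ := Nat.exists_eq_add_of_le hmpos
      simp only [Zpoly]
      have hk : ((1 + k : ℕ) : ℤ) - 1 = (k : ℤ) := by push_cast; ring
      rw [hk]
      rw [if_pos ⟨by positivity, by exact_mod_cast hmn1⟩,
          if_pos ⟨by positivity, by exact_mod_cast hmn⟩,
          if_pos ⟨by positivity, by exact_mod_cast (le_trans (Nat.le_add_right k 1) (by omega : k + 1 ≤ n))⟩]
      simp only [Int.toNat_natCast, Int.toNat_natCast]
      have h1k : 1 + k = k + 1 := by omega
      rw [h1k]
      rw [Zshift, Zshift]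
      have hsplit : ∏ i ∈ Finset.Ico (k + 1) (n + 1), (x * a + b + (i : R) * a * b)
          = (x * a + b + ((k + 1 : ℕ) : R) * a * b) *
            ∏ i ∈ Finset.Ico (k + 1 + 1) (n + 1), (x * a + b + (i : R) * a * b) := by
        exact Finset.prod_eq_prod_Ico_succ_bot (by omega) _
      rw [hsplit]
      have hpascal : (n + 1).choose (k + 1) = n.choose k + n.choose (k + 1) :=
        Nat.choose_succ_succ n k
      rw [hpascal]
      push_cast
      ring
  · -- m = n + 1
    have hm : m = n + 1 := le_antisymm hmn1 hge
    subst hm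
    simp only [Zpoly]
    rw [if_pos ⟨by positivity, le_refl _⟩]
    rw [if_neg (by push_cast; omega)]
    have hk : ((n + 1 : ℕ) : ℤ) - 1 = (n : ℤ) := by push_cast; ring
    rw [hk, if_pos ⟨by positivity, le_refl _⟩]
    simp [Finset.Ico_self]

end
end

section
/- The number of multi-Catalan tableaux of size n whose type has r A's is [2(r+1)/(n+r+2)] · C(2n+1, n−r), for 0 ≤ r ≤ n. -/
open scoped Classical

noncomputable section

/-- The three letters of the two-species PASEP: heavy particle `D`, light
particle `A`, and hole `E`. -/
inductive Letter : Type
  | D | A | E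
  deriving DecidableEq

/-- A word in the letters `{D, A, E}`. -/
abbrev Word := List Letter

/-- The states of the two-species PASEP of length `n` with exactly `r` light
particles are the words of length `n` with exactly `r` `A`'s. -/
def stateSpace (n r : ℕ) : Set Word :=
  {w | w.length = n ∧ w.count Letter.A = r}

/-! ### Multi-Catalan tableaux

A multi-Catalan tableau of type `w` is encoded by its boxes: rows are indexed
by the positions of the `D`'s and `A`'s of `w` (from top to bottom), columns by
the positions of the `E`'s and `A`'s of `w` (from right to left), and the box
in row `p` and column `p'` is present exactly when `p < p'`. -/

/-- The symbols `α` and `β` that may be placed in boxes. -/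
inductive MSymb : Type
  | a | b
  deriving DecidableEq

/-- `(p, p')` is a box of the multi-Catalan tableau of type `w`: `p < p'`, the
letter at position `p` is `D` or `A` (a D-row or A-row), and the letter at
position `p'` is `E` or `A` (an E-column or A-column). -/
def MCTCell (w : Word) (c : ℕ × ℕ) : Prop :=
  c.1 < c.2 ∧ c.2 < w.length ∧
  (w[c.1]? = some Letter.D ∨ w[c.1]? = some Letter.A) ∧
  (w[c.2]? = some Letter.E ∨ w[c.2]? = some Letter.A)

/-- There is a `β` strictly to the right of the box `c` in the same row
(columns with smaller position are farther right). -/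
def MCTBetaRight (F : ℕ × ℕ → Option MSymb) (c : ℕ × ℕ) : Prop :=
  ∃ j, c.1 < j ∧ j < c.2 ∧ F (c.1, j) = some MSymb.b

/-- There is an `α` strictly below the box `c` in the same column (rows with
larger position are farther down). -/
def MCTAlphaBelow (F : ℕ × ℕ → Option MSymb) (c : ℕ × ℕ) : Prop :=
  ∃ i, c.1 < i ∧ i < c.2 ∧ F (i, c.2) = some MSymb.a

/-- `F` is a (filled) multi-Catalan tableau of type `w`: every box left of a
`β` in its row is empty, every box above an `α` in its column is empty, a `DE`
box not forced to be empty contains `α` or `β`, a `DA` box not forced to be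
empty contains `β`, and an `AE` box not forced to be empty contains `α`
(symbols `α` only in E-columns, `β` only in D-rows). -/
structure IsMCT (w : Word) (F : ℕ × ℕ → Option MSymb) : Prop where
  support : ∀ c, ¬MCTCell w c → F c = none
  alpha_col : ∀ c, F c = some MSymb.a → w[c.2]? = some Letter.E
  beta_row : ∀ c, F c = some MSymb.b → w[c.1]? = some Letter.D
  left_of_beta : ∀ c, F c ≠ none → ¬MCTBetaRight F c
  above_alpha : ∀ c, F c ≠ none → ¬MCTAlphaBelow F c
  de_full : ∀ c, MCTCell w c → w[c.1]? = some Letter.D → w[c.2]? = some Letter.E →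
    ¬MCTBetaRight F c → ¬MCTAlphaBelow F c → F c ≠ none
  da_full : ∀ c, MCTCell w c → w[c.1]? = some Letter.D → w[c.2]? = some Letter.A →
    ¬MCTBetaRight F c → ¬MCTAlphaBelow F c → F c = some MSymb.b
  ae_full : ∀ c, MCTCell w c → w[c.1]? = some Letter.A → w[c.2]? = some Letter.E →
    ¬MCTBetaRight F c → ¬MCTAlphaBelow F c → F c = some MSymb.a

/-- The multiplicative weight contributed by the box `c`. -/
def mctCellWt {R : Type*} [CommRing R] (a b : R) (F : ℕ × ℕ → Option MSymb) (c : ℕ × ℕ) : R :=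
  match F c with
  | some MSymb.a => a
  | some MSymb.b => b
  | none => 1

/-- The weight of a multi-Catalan tableau of type `w`: the product of all its
symbols, times `α^k β^(n-k-r)` where `k` is the number of `D`'s and `n-k-r` the
number of `E`'s of `w`. -/
def mctWt {R : Type*} [CommRing R] (a b : R) (w : Word) (F : ℕ × ℕ → Option MSymb) : R :=
  a ^ (w.count Letter.D) * b ^ (w.count Letter.E) *
    ∏ᶠ c ∈ {c | MCTCell w c}, mctCellWt a b F c

/-! ### Auxiliary development -/

namespace MCTaux

/-- The set of multi-Catalan tableaux of type `w`. -/
def mset (w : Word) : Set (ℕ × ℕ → Option MSymb) := {F | IsMCT w F}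

/-- The number of multi-Catalan tableaux of type `w`. -/
def NW (w : Word) : ℕ := (mset w).ncard

lemma mcell_iff {w : Word} {c : ℕ × ℕ} :
    MCTCell w c ↔ c.1 < c.2 ∧ (w[c.1]? = some Letter.D ∨ w[c.1]? = some Letter.A) ∧
      (w[c.2]? = some Letter.E ∨ w[c.2]? = some Letter.A) := by
  constructor
  · rintro ⟨h1, h2, h3, h4⟩; exact ⟨h1, h3, h4⟩
  · rintro ⟨h1, h3, h4⟩
    refine ⟨h1, ?_, h3, h4⟩
    rcases h4 with h | h <;> exact (List.getElem?_eq_some_iff.mp h).1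

instance : Fintype MSymb := ⟨{MSymb.a, MSymb.b}, fun x => by cases x <;> simp⟩
instance : Fintype Letter := ⟨{Letter.D, Letter.A, Letter.E}, fun x => by cases x <;> simp⟩

lemma mset_finite (w : Word) : (mset w).Finite := by
  classical
  have hinj : Set.InjOn
      (fun (F : ℕ × ℕ → Option MSymb) (p : Fin w.length × Fin w.length) =>
        F ((p.1 : ℕ), (p.2 : ℕ))) (mset w) := by
    intro F hF G hG h
    funext c
    by_cases hc : MCTCell w c
    · obtain ⟨h1, h2, -, -⟩ := hc
      have := congrFun h (⟨c.1, h1.trans h2⟩, ⟨c.2, h2⟩)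
      simpa using this
    · rw [hF.support c hc, hG.support c hc]
  exact Set.Finite.of_finite_image (Set.toFinite _) hinj

/-! #### Index shifting maps for deleting a position `d` -/

/-- Insert a gap at `d`. -/
def ins (d x : ℕ) : ℕ := if x < d then x else x + 1

/-- Collapse a gap at `d`. -/
def col (d x : ℕ) : ℕ := if x ≤ d then x else x - 1

lemma ins_lt_ins {d x y : ℕ} : ins d x < ins d y ↔ x < y := by
  unfold ins; split_ifs <;> omega

lemma ins_ne {d x : ℕ} : ins d x ≠ d := by
  unfold ins; split_ifs <;> omega

lemma ins_col {d x : ℕ} (h : x ≠ d) : ins d (col d x) = x := by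
  unfold ins col; split_ifs <;> omega

lemma col_ins {d x : ℕ} : col d (ins d x) = x := by
  unfold ins col; split_ifs <;> omega

/-- Restriction of a filling along the insertion map. -/
def res (d : ℕ) (F : ℕ × ℕ → Option MSymb) : ℕ × ℕ → Option MSymb :=
  fun c => F (ins d c.1, ins d c.2)

lemma res_beta {d : ℕ} {F : ℕ × ℕ → Option MSymb} {c : ℕ × ℕ}
    (hcol : 0 < d → ∀ x, F (x, d) ≠ some MSymb.b) :
    MCTBetaRight (res d F) c ↔ MCTBetaRight F (ins d c.1, ins d c.2) := by
  constructor
  · rintro ⟨k, h1, h2, hb⟩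
    exact ⟨ins d k, ins_lt_ins.2 h1, ins_lt_ins.2 h2, hb⟩
  · rintro ⟨k, h1, h2, hb⟩
    rcases eq_or_ne k d with rfl | hk
    · exact absurd hb (hcol (lt_of_le_of_lt (Nat.zero_le _) h1) _)
    · refine ⟨col d k, ?_, ?_, ?_⟩
      · rw [← ins_col hk] at h1; exact ins_lt_ins.1 h1
      · rw [← ins_col hk] at h2; exact ins_lt_ins.1 h2
      · show F (ins d c.1, ins d (col d k)) = some MSymb.b
        rw [ins_col hk]; exact hb

lemma res_alpha {d : ℕ} {F : ℕ × ℕ → Option MSymb} {c : ℕ × ℕ}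
    (hrow : 0 < d → ∀ y, F (d, y) ≠ some MSymb.a) :
    MCTAlphaBelow (res d F) c ↔ MCTAlphaBelow F (ins d c.1, ins d c.2) := by
  constructor
  · rintro ⟨i, h1, h2, ha⟩
    exact ⟨ins d i, ins_lt_ins.2 h1, ins_lt_ins.2 h2, ha⟩
  · rintro ⟨i, h1, h2, ha⟩
    rcases eq_or_ne i d with rfl | hi
    · exact absurd ha (hrow (lt_of_le_of_lt (Nat.zero_le _) h1) _)
    · refine ⟨col d i, ?_, ?_, ?_⟩
      · rw [← ins_col hi] at h1; exact ins_lt_ins.1 h1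
      · rw [← ins_col hi] at h2; exact ins_lt_ins.1 h2
      · show F (ins d (col d i), ins d c.2) = some MSymb.a
        rw [ins_col hi]; exact ha

lemma del_cell {W W' : Word} {d : ℕ} (hW' : ∀ x, W'[x]? = W[ins d x]?) {c : ℕ × ℕ} :
    MCTCell W' c ↔ MCTCell W (ins d c.1, ins d c.2) := by
  rw [mcell_iff, mcell_iff]
  simp only [hW' c.1, hW' c.2, ins_lt_ins]

/-- Restricting a tableau of type `W` along a deleted index gives a tableau of type `W'`,
provided row `d` contains no `α` and column `d` contains no `β`. -/
lemma del_forward {W W' : Word} {d : ℕ} (hW' : ∀ x, W'[x]? = W[ins d x]?)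
    {F : ℕ × ℕ → Option MSymb} (hF : IsMCT W F)
    (hrow : 0 < d → ∀ y, F (d, y) ≠ some MSymb.a)
    (hcol : 0 < d → ∀ x, F (x, d) ≠ some MSymb.b) :
    IsMCT W' (res d F) := by
  constructor
  · intro c hc
    exact hF.support _ (fun h => hc ((del_cell hW').2 h))
  · intro c h
    have := hF.alpha_col _ h
    rw [hW']; exact this
  · intro c h
    have := hF.beta_row _ h
    rw [hW']; exact this
  · intro c h hbr
    exact hF.left_of_beta _ h ((res_beta hcol).1 hbr)
  · intro c h har
    exact hF.above_alpha _ h ((res_alpha hrow).1 har)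
  · intro c hc h1 h2 hbr har
    refine hF.de_full _ ((del_cell hW').1 hc) ?_ ?_ ?_ ?_
    · rw [hW'] at h1; exact h1
    · rw [hW'] at h2; exact h2
    · exact fun h => hbr ((res_beta hcol).2 h)
    · exact fun h => har ((res_alpha hrow).2 h)
  · intro c hc h1 h2 hbr har
    refine hF.da_full _ ((del_cell hW').1 hc) ?_ ?_ ?_ ?_
    · rw [hW'] at h1; exact h1
    · rw [hW'] at h2; exact h2
    · exact fun h => hbr ((res_beta hcol).2 h)
    · exact fun h => har ((res_alpha hrow).2 h)
  · intro c hc h1 h2 hbr har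
    refine hF.ae_full _ ((del_cell hW').1 hc) ?_ ?_ ?_ ?_
    · rw [hW'] at h1; exact h1
    · rw [hW'] at h2; exact h2
    · exact fun h => hbr ((res_beta hcol).2 h)
    · exact fun h => har ((res_alpha hrow).2 h)

/-! #### Lifting a filling along an insertion -/

/-- Extend a filling `G` by a new row/column at index `d`, with prescribed
content `P` on the new row and column. -/
def lift (d : ℕ) (P : ℕ × ℕ → Option MSymb) (G : ℕ × ℕ → Option MSymb) :
    ℕ × ℕ → Option MSymb :=
  fun c => if c.1 = d ∨ c.2 = d then P c else G (col d c.1, col d c.2)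

lemma lift_apply_off {d : ℕ} {P G : ℕ × ℕ → Option MSymb} {x y : ℕ}
    (hx : x ≠ d) (hy : y ≠ d) :
    lift d P G (x, y) = G (col d x, col d y) := by
  unfold lift
  exact if_neg (by simp [hx, hy])

lemma res_lift {d : ℕ} {P G : ℕ × ℕ → Option MSymb} : res d (lift d P G) = G := by
  funext c
  show lift d P G (ins d c.1, ins d c.2) = G c
  rw [lift_apply_off ins_ne ins_ne, col_ins, col_ins]

lemma col_lt_col {d x y : ℕ} (hx : x ≠ d) (hy : y ≠ d) (h : x < y) : col d x < col d y := by
  unfold col; split_ifs <;> omega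

lemma lift_beta {d : ℕ} {P G : ℕ × ℕ → Option MSymb} {c : ℕ × ℕ}
    (hx : c.1 ≠ d) (hy : c.2 ≠ d) (hP : c.1 < d → lift d P G (c.1, d) ≠ some MSymb.b) :
    MCTBetaRight (lift d P G) c ↔ MCTBetaRight G (col d c.1, col d c.2) := by
  constructor
  · rintro ⟨k, h1, h2, hb⟩
    rcases eq_or_ne k d with rfl | hk
    · exact absurd hb (hP h1)
    · refine ⟨col d k, col_lt_col hx hk h1, col_lt_col hk hy h2, ?_⟩
      show G (col d c.1, col d k) = some MSymb.b
      exact (lift_apply_off hx hk).symm.trans hb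
  · rintro ⟨k, h1, h2, hb⟩
    refine ⟨ins d k, ?_, ?_, ?_⟩
    · have := (@ins_lt_ins d _ _).2 h1; rwa [ins_col hx] at this
    · have := (@ins_lt_ins d _ _).2 h2; rwa [ins_col hy] at this
    · show lift d P G (c.1, ins d k) = some MSymb.b
      rw [lift_apply_off hx ins_ne, col_ins]; exact hb

lemma lift_alpha {d : ℕ} {P G : ℕ × ℕ → Option MSymb} {c : ℕ × ℕ}
    (hx : c.1 ≠ d) (hy : c.2 ≠ d) (hP : c.1 < d → lift d P G (d, c.2) ≠ some MSymb.a) :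
    MCTAlphaBelow (lift d P G) c ↔ MCTAlphaBelow G (col d c.1, col d c.2) := by
  constructor
  · rintro ⟨i, h1, h2, ha⟩
    rcases eq_or_ne i d with rfl | hi
    · exact absurd ha (hP h1)
    · refine ⟨col d i, col_lt_col hx hi h1, col_lt_col hi hy h2, ?_⟩
      show G (col d i, col d c.2) = some MSymb.a
      exact (lift_apply_off hi hy).symm.trans ha
  · rintro ⟨i, h1, h2, ha⟩
    refine ⟨ins d i, ?_, ?_, ?_⟩
    · have := (@ins_lt_ins d _ _).2 h1; rwa [ins_col hx] at this
    · have := (@ins_lt_ins d _ _).2 h2; rwa [ins_col hy] at this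
    · show lift d P G (ins d i, c.2) = some MSymb.a
      rw [lift_apply_off ins_ne hy, col_ins]; exact ha

lemma lift_cell {W W' : Word} {d : ℕ} (hW' : ∀ x, W'[x]? = W[ins d x]?) {x y : ℕ}
    (hx : x ≠ d) (hy : y ≠ d) :
    MCTCell W (x, y) ↔ MCTCell W' (col d x, col d y) := by
  have := del_cell hW' (c := (col d x, col d y))
  rw [show ins d (col d x) = x from ins_col hx, show ins d (col d y) = y from ins_col hy] at this
  exact this.symm

end MCTaux
namespace MCTaux

variable {W W' : Word} {d : ℕ} {F : ℕ × ℕ → Option MSymb}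

lemma row_b_struct (hF : IsMCT W F) (hb : F (d, d + 1) = some MSymb.b) :
    ∀ y, y ≠ d + 1 → F (d, y) = none := by
  intro y hy
  rcases lt_or_ge y (d + 1) with h | h
  · exact hF.support _ (fun hc => absurd hc.1 (by omega))
  · by_contra hne
    exact hF.left_of_beta (d, y) hne ⟨d + 1, by omega, by omega, hb⟩

lemma col_none_of_D (hF : IsMCT W F) (hd : W[d]? = some Letter.D) :
    ∀ x, F (x, d) = none := by
  intro x
  apply hF.support
  rintro ⟨-, -, -, h⟩
  rw [hd] at h
  rcases h with h | h <;> simp at h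

lemma col_a_struct (hF : IsMCT W F) (ha : F (d, d + 1) = some MSymb.a) :
    ∀ x, x ≠ d → F (x, d + 1) = none := by
  intro x hx
  rcases lt_or_ge x d with h | h
  · by_contra hne
    exact hF.above_alpha (x, d + 1) hne ⟨d, h, by omega, ha⟩
  · exact hF.support _ (fun hc => absurd hc.1 (by omega))

lemma row_none_of_E (hF : IsMCT W F) (hd1 : W[d + 1]? = some Letter.E) :
    ∀ y, F (d + 1, y) = none := by
  intro y
  apply hF.support
  rintro ⟨-, -, h, -⟩
  rw [hd1] at h
  rcases h with h | h <;> simp at h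

lemma ncard_delRow (hW' : ∀ x, W'[x]? = W[ins d x]?)
    (hd : W[d]? = some Letter.D)
    (hd1 : W[d + 1]? = some Letter.E ∨ W[d + 1]? = some Letter.A) :
    {F | IsMCT W F ∧ F (d, d + 1) = some MSymb.b}.ncard = NW W' := by
  classical
  have hcell0 : MCTCell W (d, d + 1) := mcell_iff.2 ⟨by omega, Or.inl hd, hd1⟩
  set S : Set (ℕ × ℕ → Option MSymb) := {F | IsMCT W F ∧ F (d, d + 1) = some MSymb.b} with hS
  have hinj : S.InjOn (res d) := by
    intro F hF F' hF' h
    obtain ⟨hF, hFb⟩ := hF; obtain ⟨hF', hF'b⟩ := hF'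
    funext c; obtain ⟨x, y⟩ := c
    rcases eq_or_ne d x with rfl | hx0
    · rcases eq_or_ne y (d + 1) with rfl | hy
      · rw [hFb, hF'b]
      · rw [row_b_struct hF hFb y hy, row_b_struct hF' hF'b y hy]
    · have hx : x ≠ d := hx0.symm
      rcases eq_or_ne d y with rfl | hy0
      · rw [col_none_of_D hF hd, col_none_of_D hF' hd]
      · have hy : y ≠ d := hy0.symm
        have := congrFun h (col d x, col d y)
        simpa [res, ins_col hx, ins_col hy] using this
  have himg : res d '' S = mset W' := by
    apply Set.Subset.antisymm
    · rintro _ ⟨F, ⟨hF, hFb⟩, rfl⟩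
      refine del_forward hW' hF ?_ ?_
      · intro _ y ha
        rcases eq_or_ne y (d + 1) with rfl | hy
        · rw [hFb] at ha; simp at ha
        · rw [row_b_struct hF hFb y hy] at ha; simp at ha
      · intro _ x hbx
        rw [col_none_of_D hF hd x] at hbx; simp at hbx
    · intro G hG
      set P : ℕ × ℕ → Option MSymb :=
        fun c => if c.1 = d ∧ c.2 = d + 1 then some MSymb.b else none with hP
      have hlrow : ∀ y, lift d P G (d, y) = if y = d + 1 then some MSymb.b else none := by
        intro y; simp [lift, hP]
      have hlcol : ∀ x, x ≠ d → lift d P G (x, d) = none := by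
        intro x hx
        have h1 : lift d P G (x, d) = P (x, d) := if_pos (Or.inr rfl)
        rw [h1, hP]
        exact if_neg (by omega)
      have hlb : lift d P G (d, d + 1) = some MSymb.b := by rw [hlrow]; simp
      have hmem : IsMCT W (lift d P G) := by
        constructor
        · rintro ⟨x, y⟩ hc
          rcases eq_or_ne d x with rfl | hx0
          · rw [hlrow]
            split_ifs with h
            · exact absurd (h ▸ hcell0) hc
            · rfl
          · have hx : x ≠ d := hx0.symm
            rcases eq_or_ne d y with rfl | hy0
            · exact hlcol x hx
            · have hy : y ≠ d := hy0.symm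
              rw [show lift d P G (x, y) = G (col d x, col d y) from lift_apply_off hx hy]
              exact hG.support _ (fun h => hc ((lift_cell hW' hx hy).2 h))
        · rintro ⟨x, y⟩ h
          rcases eq_or_ne d x with rfl | hx0
          · rw [hlrow] at h; split_ifs at h <;> simp at h
          · have hx : x ≠ d := hx0.symm
            rcases eq_or_ne d y with rfl | hy0
            · rw [hlcol x hx] at h; simp at h
            · have hy : y ≠ d := hy0.symm
              rw [show lift d P G (x, y) = G (col d x, col d y) from lift_apply_off hx hy] at h
              have h2 := hG.alpha_col _ h
              rwa [hW', ins_col hy] at h2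
        · rintro ⟨x, y⟩ h
          rcases eq_or_ne d x with rfl | hx0
          · exact hd
          · have hx : x ≠ d := hx0.symm
            rcases eq_or_ne d y with rfl | hy0
            · rw [hlcol x hx] at h; simp at h
            · have hy : y ≠ d := hy0.symm
              rw [show lift d P G (x, y) = G (col d x, col d y) from lift_apply_off hx hy] at h
              have h2 := hG.beta_row _ h
              rwa [hW', ins_col hx] at h2
        · rintro ⟨x, y⟩ h ⟨k, h1, h2, hb⟩
          have hb : lift d P G (x, k) = some MSymb.b := hb
          have h1 : x < k := h1
          have h2 : k < y := h2
          rcases eq_or_ne d x with rfl | hx0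
          · rw [hlrow] at h
            by_cases hy : y = d + 1
            · omega
            · rw [if_neg hy] at h; exact h rfl
          · have hx : x ≠ d := hx0.symm
            rcases eq_or_ne d y with rfl | hy0
            · rw [hlcol x hx] at h; exact h rfl
            · have hy : y ≠ d := hy0.symm
              rcases eq_or_ne d k with rfl | hk0
              · rw [hlcol x hx] at hb; simp at hb
              · have hk : k ≠ d := hk0.symm
                rw [show lift d P G (x, y) = G (col d x, col d y) from
                  lift_apply_off hx hy] at h
                exact hG.left_of_beta _ h ⟨col d k, col_lt_col hx hk h1,
                  col_lt_col hk hy h2, (lift_apply_off hx hk).symm.trans hb⟩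
        · rintro ⟨x, y⟩ h ⟨i, h1, h2, ha⟩
          have ha : lift d P G (i, y) = some MSymb.a := ha
          have h1 : x < i := h1
          have h2 : i < y := h2
          rcases eq_or_ne d x with rfl | hx0
          · rw [hlrow] at h
            by_cases hy : y = d + 1
            · omega
            · rw [if_neg hy] at h; exact h rfl
          · have hx : x ≠ d := hx0.symm
            rcases eq_or_ne d y with rfl | hy0
            · rw [hlcol x hx] at h; exact h rfl
            · have hy : y ≠ d := hy0.symm
              rcases eq_or_ne d i with rfl | hi0
              · rw [hlrow] at ha; split_ifs at ha <;> simp at ha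
              · have hi : i ≠ d := hi0.symm
                rw [show lift d P G (x, y) = G (col d x, col d y) from
                  lift_apply_off hx hy] at h
                exact hG.above_alpha _ h ⟨col d i, col_lt_col hx hi h1,
                  col_lt_col hi hy h2, (lift_apply_off hi hy).symm.trans ha⟩
        · rintro ⟨x, y⟩ hc hx' hy' hbr har
          rcases eq_or_ne d x with rfl | hx0
          · rcases eq_or_ne y (d + 1) with rfl | hy
            · rw [hlb]; simp
            · exfalso
              have hcy : d < y := hc.1
              exact hbr ⟨d + 1, by omega, by omega, hlb⟩
          · have hx : x ≠ d := hx0.symm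
            rcases eq_or_ne d y with rfl | hy0
            · exact absurd (hd.symm.trans hy') (by simp)
            · have hy : y ≠ d := hy0.symm
              rw [show lift d P G (x, y) = G (col d x, col d y) from lift_apply_off hx hy]
              refine hG.de_full (col d x, col d y) ((lift_cell hW' hx hy).1 hc) ?_ ?_ ?_ ?_
              · show W'[col d x]? = some Letter.D
                rw [hW', ins_col hx]; exact hx'
              · show W'[col d y]? = some Letter.E
                rw [hW', ins_col hy]; exact hy'
              · exact fun hb => hbr ((lift_beta hx hy
                  (fun _ => by
                    show lift d P G (x, d) ≠ some MSymb.b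
                    rw [hlcol x hx]; simp)).2 hb)
              · exact fun ha => har ((lift_alpha hx hy
                  (fun _ => by
                      show lift d P G (d, y) ≠ some MSymb.a
                      rw [hlrow]; split_ifs <;> simp)).2 ha)
        · rintro ⟨x, y⟩ hc hx' hy' hbr har
          rcases eq_or_ne d x with rfl | hx0
          · rcases eq_or_ne y (d + 1) with rfl | hy
            · exact hlb
            · exfalso
              have hcy : d < y := hc.1
              exact hbr ⟨d + 1, by omega, by omega, hlb⟩
          · have hx : x ≠ d := hx0.symm
            rcases eq_or_ne d y with rfl | hy0
            · exact absurd (hd.symm.trans hy') (by simp)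
            · have hy : y ≠ d := hy0.symm
              rw [show lift d P G (x, y) = G (col d x, col d y) from lift_apply_off hx hy]
              refine hG.da_full (col d x, col d y) ((lift_cell hW' hx hy).1 hc) ?_ ?_ ?_ ?_
              · show W'[col d x]? = some Letter.D
                rw [hW', ins_col hx]; exact hx'
              · show W'[col d y]? = some Letter.A
                rw [hW', ins_col hy]; exact hy'
              · exact fun hb => hbr ((lift_beta hx hy
                  (fun _ => by
                    show lift d P G (x, d) ≠ some MSymb.b
                    rw [hlcol x hx]; simp)).2 hb)
              · exact fun ha => har ((lift_alpha hx hy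
                  (fun _ => by
                      show lift d P G (d, y) ≠ some MSymb.a
                      rw [hlrow]; split_ifs <;> simp)).2 ha)
        · rintro ⟨x, y⟩ hc hx' hy' hbr har
          rcases eq_or_ne d x with rfl | hx0
          · exact absurd (hd.symm.trans hx') (by simp)
          · have hx : x ≠ d := hx0.symm
            rcases eq_or_ne d y with rfl | hy0
            · exact absurd (hd.symm.trans hy') (by simp)
            · have hy : y ≠ d := hy0.symm
              rw [show lift d P G (x, y) = G (col d x, col d y) from lift_apply_off hx hy]
              refine hG.ae_full (col d x, col d y) ((lift_cell hW' hx hy).1 hc) ?_ ?_ ?_ ?_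
              · show W'[col d x]? = some Letter.A
                rw [hW', ins_col hx]; exact hx'
              · show W'[col d y]? = some Letter.E
                rw [hW', ins_col hy]; exact hy'
              · exact fun hb => hbr ((lift_beta hx hy
                  (fun _ => by
                    show lift d P G (x, d) ≠ some MSymb.b
                    rw [hlcol x hx]; simp)).2 hb)
              · exact fun ha => har ((lift_alpha hx hy
                  (fun _ => by
                      show lift d P G (d, y) ≠ some MSymb.a
                      rw [hlrow]; split_ifs <;> simp)).2 ha)
      exact ⟨lift d P G, ⟨hmem, hlb⟩, res_lift⟩
  calc S.ncard = (res d '' S).ncard := (Set.ncard_image_of_injOn hinj).symm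
    _ = NW W' := by rw [himg]; rfl

end MCTaux
namespace MCTaux

variable {W W' : Word} {d : ℕ} {F : ℕ × ℕ → Option MSymb}

lemma ncard_delCol (hW' : ∀ x, W'[x]? = W[ins (d + 1) x]?)
    (hd : W[d]? = some Letter.D ∨ W[d]? = some Letter.A)
    (hd1 : W[d + 1]? = some Letter.E) :
    {F | IsMCT W F ∧ F (d, d + 1) = some MSymb.a}.ncard = NW W' := by
  classical
  have hcell0 : MCTCell W (d, d + 1) := mcell_iff.2 ⟨by omega, hd, Or.inl hd1⟩
  set S : Set (ℕ × ℕ → Option MSymb) := {F | IsMCT W F ∧ F (d, d + 1) = some MSymb.a} with hS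
  have hinj : S.InjOn (res (d + 1)) := by
    intro F hF F' hF' h
    obtain ⟨hF, hFa⟩ := hF; obtain ⟨hF', hF'a⟩ := hF'
    funext c; obtain ⟨x, y⟩ := c
    rcases eq_or_ne (d + 1) x with rfl | hx0
    · rw [row_none_of_E hF hd1 y, row_none_of_E hF' hd1 y]
    · have hx : x ≠ d + 1 := hx0.symm
      rcases eq_or_ne (d + 1) y with rfl | hy0
      · rcases eq_or_ne d x with rfl | hxd
        · rw [hFa, hF'a]
        · rw [col_a_struct hF hFa x hxd.symm, col_a_struct hF' hF'a x hxd.symm]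
      · have hy : y ≠ d + 1 := hy0.symm
        have := congrFun h (col (d + 1) x, col (d + 1) y)
        simpa [res, ins_col hx, ins_col hy] using this
  have himg : res (d + 1) '' S = mset W' := by
    apply Set.Subset.antisymm
    · rintro _ ⟨F, ⟨hF, hFa⟩, rfl⟩
      refine del_forward hW' hF ?_ ?_
      · intro _ y ha
        rw [row_none_of_E hF hd1 y] at ha; simp at ha
      · intro _ x hbx
        rcases eq_or_ne d x with rfl | hxd
        · rw [hFa] at hbx; simp at hbx
        · rw [col_a_struct hF hFa x hxd.symm] at hbx; simp at hbx
    · intro G hG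
      set P : ℕ × ℕ → Option MSymb :=
        fun c => if c.1 = d ∧ c.2 = d + 1 then some MSymb.a else none with hP
      have hlcol : ∀ x, lift (d + 1) P G (x, d + 1) = if x = d then some MSymb.a else none := by
        intro x; simp [lift, hP]
      have hlrow : ∀ y, y ≠ d + 1 → lift (d + 1) P G (d + 1, y) = none := by
        intro y hy
        have h1 : lift (d + 1) P G (d + 1, y) = P (d + 1, y) := if_pos (Or.inl rfl)
        rw [h1, hP]
        exact if_neg (by omega)
      have hla : lift (d + 1) P G (d, d + 1) = some MSymb.a := by rw [hlcol]; simp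
      have hmem : IsMCT W (lift (d + 1) P G) := by
        constructor
        · rintro ⟨x, y⟩ hc
          rcases eq_or_ne (d + 1) y with rfl | hy0
          · rw [hlcol]
            split_ifs with h
            · exact absurd (show MCTCell W (x, d + 1) by rw [h]; exact hcell0) hc
            · rfl
          · have hy : y ≠ d + 1 := hy0.symm
            rcases eq_or_ne (d + 1) x with rfl | hx0
            · exact hlrow y hy
            · have hx : x ≠ d + 1 := hx0.symm
              rw [show lift (d + 1) P G (x, y) = G (col (d + 1) x, col (d + 1) y) from
                lift_apply_off hx hy]
              exact hG.support _ (fun h => hc ((lift_cell hW' hx hy).2 h))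
        · rintro ⟨x, y⟩ h
          rcases eq_or_ne (d + 1) y with rfl | hy0
          · exact hd1
          · have hy : y ≠ d + 1 := hy0.symm
            rcases eq_or_ne (d + 1) x with rfl | hx0
            · rw [hlrow y hy] at h; simp at h
            · have hx : x ≠ d + 1 := hx0.symm
              rw [show lift (d + 1) P G (x, y) = G (col (d + 1) x, col (d + 1) y) from
                lift_apply_off hx hy] at h
              have h2 := hG.alpha_col _ h
              rwa [hW', ins_col hy] at h2
        · rintro ⟨x, y⟩ h
          rcases eq_or_ne (d + 1) y with rfl | hy0
          · rw [hlcol] at h; split_ifs at h <;> simp at h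
          · have hy : y ≠ d + 1 := hy0.symm
            rcases eq_or_ne (d + 1) x with rfl | hx0
            · rw [hlrow y hy] at h; simp at h
            · have hx : x ≠ d + 1 := hx0.symm
              rw [show lift (d + 1) P G (x, y) = G (col (d + 1) x, col (d + 1) y) from
                lift_apply_off hx hy] at h
              have h2 := hG.beta_row _ h
              rwa [hW', ins_col hx] at h2
        · rintro ⟨x, y⟩ h ⟨k, h1, h2, hb⟩
          have hb : lift (d + 1) P G (x, k) = some MSymb.b := hb
          have h1 : x < k := h1
          have h2 : k < y := h2
          rcases eq_or_ne (d + 1) x with rfl | hx0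
          · exact (by rw [hlrow k (by omega)] at hb; simp at hb)
          · have hx : x ≠ d + 1 := hx0.symm
            rcases eq_or_ne (d + 1) y with rfl | hy0
            · rw [hlcol] at h
              by_cases hxd : x = d
              · omega
              · rw [if_neg hxd] at h; exact h rfl
            · have hy : y ≠ d + 1 := hy0.symm
              rcases eq_or_ne (d + 1) k with rfl | hk0
              · rw [hlcol] at hb; split_ifs at hb <;> simp at hb
              · have hk : k ≠ d + 1 := hk0.symm
                rw [show lift (d + 1) P G (x, y) = G (col (d + 1) x, col (d + 1) y) from
                  lift_apply_off hx hy] at h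
                exact hG.left_of_beta _ h ⟨col (d + 1) k, col_lt_col hx hk h1,
                  col_lt_col hk hy h2, (lift_apply_off hx hk).symm.trans hb⟩
        · rintro ⟨x, y⟩ h ⟨i, h1, h2, ha⟩
          have ha : lift (d + 1) P G (i, y) = some MSymb.a := ha
          have h1 : x < i := h1
          have h2 : i < y := h2
          rcases eq_or_ne (d + 1) x with rfl | hx0
          · rw [hlrow y (by omega)] at h; exact h rfl
          · have hx : x ≠ d + 1 := hx0.symm
            rcases eq_or_ne (d + 1) y with rfl | hy0
            · rw [hlcol] at h
              by_cases hxd : x = d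
              · omega
              · rw [if_neg hxd] at h; exact h rfl
            · have hy : y ≠ d + 1 := hy0.symm
              rcases eq_or_ne (d + 1) i with rfl | hi0
              · rw [hlrow y hy] at ha; simp at ha
              · have hi : i ≠ d + 1 := hi0.symm
                rw [show lift (d + 1) P G (x, y) = G (col (d + 1) x, col (d + 1) y) from
                  lift_apply_off hx hy] at h
                exact hG.above_alpha _ h ⟨col (d + 1) i, col_lt_col hx hi h1,
                  col_lt_col hi hy h2, (lift_apply_off hi hy).symm.trans ha⟩
        · rintro ⟨x, y⟩ hc hx' hy' hbr har
          rcases eq_or_ne (d + 1) y with rfl | hy0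
          · rcases eq_or_ne d x with rfl | hxd
            · rw [hla]; simp
            · exfalso
              have hcx : x < d + 1 := hc.1
              exact har ⟨d, by omega, by omega, hla⟩
          · have hy : y ≠ d + 1 := hy0.symm
            rcases eq_or_ne (d + 1) x with rfl | hx0
            · exact absurd (hd1.symm.trans hx') (by simp)
            · have hx : x ≠ d + 1 := hx0.symm
              rw [show lift (d + 1) P G (x, y) = G (col (d + 1) x, col (d + 1) y) from
                lift_apply_off hx hy]
              refine hG.de_full (col (d + 1) x, col (d + 1) y)
                ((lift_cell hW' hx hy).1 hc) ?_ ?_ ?_ ?_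
              · show W'[col (d + 1) x]? = some Letter.D
                rw [hW', ins_col hx]; exact hx'
              · show W'[col (d + 1) y]? = some Letter.E
                rw [hW', ins_col hy]; exact hy'
              · exact fun hb => hbr ((lift_beta hx hy
                  (fun _ => by
                    show lift (d + 1) P G (x, d + 1) ≠ some MSymb.b
                    rw [hlcol]; split_ifs <;> simp)).2 hb)
              · exact fun ha => har ((lift_alpha hx hy
                  (fun _ => by
                      show lift (d + 1) P G (d + 1, y) ≠ some MSymb.a
                      rw [hlrow y hy]; simp)).2 ha)
        · rintro ⟨x, y⟩ hc hx' hy' hbr har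
          rcases eq_or_ne (d + 1) y with rfl | hy0
          · exact absurd (hd1.symm.trans hy') (by simp)
          · have hy : y ≠ d + 1 := hy0.symm
            rcases eq_or_ne (d + 1) x with rfl | hx0
            · exact absurd (hd1.symm.trans hx') (by simp)
            · have hx : x ≠ d + 1 := hx0.symm
              rw [show lift (d + 1) P G (x, y) = G (col (d + 1) x, col (d + 1) y) from
                lift_apply_off hx hy]
              refine hG.da_full (col (d + 1) x, col (d + 1) y)
                ((lift_cell hW' hx hy).1 hc) ?_ ?_ ?_ ?_
              · show W'[col (d + 1) x]? = some Letter.D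
                rw [hW', ins_col hx]; exact hx'
              · show W'[col (d + 1) y]? = some Letter.A
                rw [hW', ins_col hy]; exact hy'
              · exact fun hb => hbr ((lift_beta hx hy
                  (fun _ => by
                    show lift (d + 1) P G (x, d + 1) ≠ some MSymb.b
                    rw [hlcol]; split_ifs <;> simp)).2 hb)
              · exact fun ha => har ((lift_alpha hx hy
                  (fun _ => by
                      show lift (d + 1) P G (d + 1, y) ≠ some MSymb.a
                      rw [hlrow y hy]; simp)).2 ha)
        · rintro ⟨x, y⟩ hc hx' hy' hbr har
          rcases eq_or_ne (d + 1) y with rfl | hy0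
          · rcases eq_or_ne d x with rfl | hxd
            · exact hla
            · exfalso
              have hcx : x < d + 1 := hc.1
              exact har ⟨d, by omega, by omega, hla⟩
          · have hy : y ≠ d + 1 := hy0.symm
            rcases eq_or_ne (d + 1) x with rfl | hx0
            · exact absurd (hd1.symm.trans hx') (by simp)
            · have hx : x ≠ d + 1 := hx0.symm
              rw [show lift (d + 1) P G (x, y) = G (col (d + 1) x, col (d + 1) y) from
                lift_apply_off hx hy]
              refine hG.ae_full (col (d + 1) x, col (d + 1) y)
                ((lift_cell hW' hx hy).1 hc) ?_ ?_ ?_ ?_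
              · show W'[col (d + 1) x]? = some Letter.A
                rw [hW', ins_col hx]; exact hx'
              · show W'[col (d + 1) y]? = some Letter.E
                rw [hW', ins_col hy]; exact hy'
              · exact fun hb => hbr ((lift_beta hx hy
                  (fun _ => by
                    show lift (d + 1) P G (x, d + 1) ≠ some MSymb.b
                    rw [hlcol]; split_ifs <;> simp)).2 hb)
              · exact fun ha => har ((lift_alpha hx hy
                  (fun _ => by
                      show lift (d + 1) P G (d + 1, y) ≠ some MSymb.a
                      rw [hlrow y hy]; simp)).2 ha)
      exact ⟨lift (d + 1) P G, ⟨hmem, hla⟩, res_lift⟩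
  calc S.ncard = (res (d + 1) '' S).ncard := (Set.ncard_image_of_injOn hinj).symm
    _ = NW W' := by rw [himg]; rfl

end MCTaux
namespace MCTaux

/-- Deleting a leading `E` does not change the number of tableaux. -/
lemma NW_cons_E (w : Word) : NW (Letter.E :: w) = NW w := by
  classical
  set W : Word := Letter.E :: w with hWdef
  have hW' : ∀ x, w[x]? = W[ins 0 x]? := by
    intro x; simp [ins, hWdef]
  have hrow0 : ∀ F, IsMCT W F → ∀ y, F (0, y) = none := by
    intro F hF y
    apply hF.support
    rintro ⟨-, -, h, -⟩
    rcases h with h | h <;> simp [hWdef] at h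
  have hcol0 : ∀ (F : ℕ × ℕ → Option MSymb), IsMCT W F → ∀ x, F (x, 0) = none := by
    intro F hF x
    exact hF.support _ (fun hc => absurd hc.1 (by omega))
  have hinj : (mset W).InjOn (res 0) := by
    intro F hF F' hF' h
    funext c; obtain ⟨x, y⟩ := c
    rcases eq_or_ne (0 : ℕ) x with rfl | hx0
    · rw [hrow0 F hF y, hrow0 F' hF' y]
    · have hx : x ≠ 0 := hx0.symm
      rcases eq_or_ne (0 : ℕ) y with rfl | hy0
      · rw [hcol0 F hF x, hcol0 F' hF' x]
      · have hy : y ≠ 0 := hy0.symm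
        have := congrFun h (col 0 x, col 0 y)
        simpa [res, ins_col hx, ins_col hy] using this
  have himg : res 0 '' mset W = mset w := by
    apply Set.Subset.antisymm
    · rintro _ ⟨F, hF, rfl⟩
      exact del_forward hW' hF (fun h => absurd h (lt_irrefl 0))
        (fun h => absurd h (lt_irrefl 0))
    · intro G hG
      set P : ℕ × ℕ → Option MSymb := fun _ => none with hP
      have hl0 : ∀ c : ℕ × ℕ, c.1 = 0 ∨ c.2 = 0 → lift 0 P G c = none := by
        intro c hc
        rw [show lift 0 P G c = P c from if_pos hc, hP]
      have hmem : IsMCT W (lift 0 P G) := by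
        constructor
        · rintro ⟨x, y⟩ hc
          rcases eq_or_ne (0 : ℕ) x with rfl | hx0
          · exact hl0 _ (Or.inl rfl)
          · have hx : x ≠ 0 := hx0.symm
            rcases eq_or_ne (0 : ℕ) y with rfl | hy0
            · exact hl0 _ (Or.inr rfl)
            · have hy : y ≠ 0 := hy0.symm
              rw [show lift 0 P G (x, y) = G (col 0 x, col 0 y) from lift_apply_off hx hy]
              exact hG.support _ (fun h => hc ((lift_cell hW' hx hy).2 h))
        · rintro ⟨x, y⟩ h
          rcases eq_or_ne (0 : ℕ) x with rfl | hx0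
          · rw [hl0 _ (Or.inl rfl)] at h; simp at h
          · have hx : x ≠ 0 := hx0.symm
            rcases eq_or_ne (0 : ℕ) y with rfl | hy0
            · rw [hl0 _ (Or.inr rfl)] at h; simp at h
            · have hy : y ≠ 0 := hy0.symm
              rw [show lift 0 P G (x, y) = G (col 0 x, col 0 y) from lift_apply_off hx hy] at h
              have h2 := hG.alpha_col _ h
              rwa [hW', ins_col hy] at h2
        · rintro ⟨x, y⟩ h
          rcases eq_or_ne (0 : ℕ) x with rfl | hx0
          · rw [hl0 _ (Or.inl rfl)] at h; simp at h
          · have hx : x ≠ 0 := hx0.symm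
            rcases eq_or_ne (0 : ℕ) y with rfl | hy0
            · rw [hl0 _ (Or.inr rfl)] at h; simp at h
            · have hy : y ≠ 0 := hy0.symm
              rw [show lift 0 P G (x, y) = G (col 0 x, col 0 y) from lift_apply_off hx hy] at h
              have h2 := hG.beta_row _ h
              rwa [hW', ins_col hx] at h2
        · rintro ⟨x, y⟩ h ⟨k, h1, h2, hb⟩
          have hb : lift 0 P G (x, k) = some MSymb.b := hb
          have h1 : x < k := h1
          have h2 : k < y := h2
          rcases eq_or_ne (0 : ℕ) x with rfl | hx0
          · exact h (hl0 _ (Or.inl rfl))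
          · have hx : x ≠ 0 := hx0.symm
            rcases eq_or_ne (0 : ℕ) y with rfl | hy0
            · exact h (hl0 _ (Or.inr rfl))
            · have hy : y ≠ 0 := hy0.symm
              have hk : k ≠ 0 := by omega
              rw [show lift 0 P G (x, y) = G (col 0 x, col 0 y) from lift_apply_off hx hy] at h
              exact hG.left_of_beta _ h ⟨col 0 k, col_lt_col hx hk h1,
                col_lt_col hk hy h2, (lift_apply_off hx hk).symm.trans hb⟩
        · rintro ⟨x, y⟩ h ⟨i, h1, h2, ha⟩
          have ha : lift 0 P G (i, y) = some MSymb.a := ha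
          have h1 : x < i := h1
          have h2 : i < y := h2
          rcases eq_or_ne (0 : ℕ) x with rfl | hx0
          · exact h (hl0 _ (Or.inl rfl))
          · have hx : x ≠ 0 := hx0.symm
            rcases eq_or_ne (0 : ℕ) y with rfl | hy0
            · exact h (hl0 _ (Or.inr rfl))
            · have hy : y ≠ 0 := hy0.symm
              have hi : i ≠ 0 := by omega
              rw [show lift 0 P G (x, y) = G (col 0 x, col 0 y) from lift_apply_off hx hy] at h
              exact hG.above_alpha _ h ⟨col 0 i, col_lt_col hx hi h1,
                col_lt_col hi hy h2, (lift_apply_off hi hy).symm.trans ha⟩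
        · rintro ⟨x, y⟩ hc hx' hy' hbr har
          rcases eq_or_ne (0 : ℕ) x with rfl | hx0
          · exact absurd hx' (by simp [hWdef])
          · have hx : x ≠ 0 := hx0.symm
            rcases eq_or_ne (0 : ℕ) y with rfl | hy0
            · exact absurd hc.1 (by omega)
            · have hy : y ≠ 0 := hy0.symm
              rw [show lift 0 P G (x, y) = G (col 0 x, col 0 y) from lift_apply_off hx hy]
              refine hG.de_full (col 0 x, col 0 y) ((lift_cell hW' hx hy).1 hc) ?_ ?_ ?_ ?_
              · show w[col 0 x]? = some Letter.D
                rw [hW', ins_col hx]; exact hx'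
              · show w[col 0 y]? = some Letter.E
                rw [hW', ins_col hy]; exact hy'
              · exact fun hb => hbr ((lift_beta hx hy (fun hlt => absurd hlt (by omega))).2 hb)
              · exact fun ha => har ((lift_alpha hx hy (fun hlt => absurd hlt (by omega))).2 ha)
        · rintro ⟨x, y⟩ hc hx' hy' hbr har
          rcases eq_or_ne (0 : ℕ) x with rfl | hx0
          · exact absurd hx' (by simp [hWdef])
          · have hx : x ≠ 0 := hx0.symm
            rcases eq_or_ne (0 : ℕ) y with rfl | hy0
            · exact absurd hc.1 (by omega)
            · have hy : y ≠ 0 := hy0.symm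
              rw [show lift 0 P G (x, y) = G (col 0 x, col 0 y) from lift_apply_off hx hy]
              refine hG.da_full (col 0 x, col 0 y) ((lift_cell hW' hx hy).1 hc) ?_ ?_ ?_ ?_
              · show w[col 0 x]? = some Letter.D
                rw [hW', ins_col hx]; exact hx'
              · show w[col 0 y]? = some Letter.A
                rw [hW', ins_col hy]; exact hy'
              · exact fun hb => hbr ((lift_beta hx hy (fun hlt => absurd hlt (by omega))).2 hb)
              · exact fun ha => har ((lift_alpha hx hy (fun hlt => absurd hlt (by omega))).2 ha)
        · rintro ⟨x, y⟩ hc hx' hy' hbr har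
          rcases eq_or_ne (0 : ℕ) x with rfl | hx0
          · exact absurd hx' (by simp [hWdef])
          · have hx : x ≠ 0 := hx0.symm
            rcases eq_or_ne (0 : ℕ) y with rfl | hy0
            · exact absurd hc.1 (by omega)
            · have hy : y ≠ 0 := hy0.symm
              rw [show lift 0 P G (x, y) = G (col 0 x, col 0 y) from lift_apply_off hx hy]
              refine hG.ae_full (col 0 x, col 0 y) ((lift_cell hW' hx hy).1 hc) ?_ ?_ ?_ ?_
              · show w[col 0 x]? = some Letter.A
                rw [hW', ins_col hx]; exact hx'
              · show w[col 0 y]? = some Letter.E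
                rw [hW', ins_col hy]; exact hy'
              · exact fun hb => hbr ((lift_beta hx hy (fun hlt => absurd hlt (by omega))).2 hb)
              · exact fun ha => har ((lift_alpha hx hy (fun hlt => absurd hlt (by omega))).2 ha)
      exact ⟨lift 0 P G, hmem, res_lift⟩
  calc NW W = (res 0 '' mset W).ncard := (Set.ncard_image_of_injOn hinj).symm
    _ = NW w := by rw [himg]; rfl

end MCTaux
namespace MCTaux

lemma col_zero {x : ℕ} (hx : x ≠ 0) : col 0 x = x - 1 := by
  unfold col; split_ifs <;> omega

/-- Deleting a leading `A` does not change the number of tableaux. -/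
lemma NW_cons_A (w : Word) : NW (Letter.A :: w) = NW w := by
  classical
  set W : Word := Letter.A :: w with hWdef
  have hW0 : W[0]? = some Letter.A := by simp [hWdef]
  have hW' : ∀ x, w[x]? = W[ins 0 x]? := by
    intro x; simp [ins, hWdef]
  have hcol0 : ∀ (F : ℕ × ℕ → Option MSymb), IsMCT W F → ∀ x, F (x, 0) = none := by
    intro F hF x
    exact hF.support _ (fun hc => absurd hc.1 (by omega))
  -- row 0 is determined by the rest of the filling
  have hrow_det : ∀ F, IsMCT W F → ∀ y,
      F (0, y) = if W[y]? = some Letter.E ∧ ¬MCTAlphaBelow F (0, y)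
        then some MSymb.a else none := by
    intro F hF y
    split_ifs with h
    · have hy0 : y ≠ 0 := by
        intro hy; rw [hy, hW0] at h; simp at h
      refine hF.ae_full (0, y) (mcell_iff.2 ⟨by omega, Or.inr hW0, Or.inl h.1⟩) hW0 h.1 ?_ h.2
      rintro ⟨k, -, -, hb⟩
      have := hF.beta_row _ hb
      rw [hW0] at this; simp at this
    · rcases hFy : F (0, y) with - | v
      · rfl
      · exfalso
        cases v
        · have h1 := hF.alpha_col _ hFy
          have h2 := hF.above_alpha (0, y) (by rw [hFy]; simp)
          exact h ⟨h1, h2⟩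
        · have := hF.beta_row _ hFy
          rw [hW0] at this; simp at this
  have hinj : (mset W).InjOn (res 0) := by
    intro F hF F' hF' h
    have hoff : ∀ a b : ℕ, a ≠ 0 → b ≠ 0 → F (a, b) = F' (a, b) := by
      intro a b ha hb
      have := congrFun h (col 0 a, col 0 b)
      simpa [res, ins_col ha, ins_col hb] using this
    funext c; obtain ⟨x, y⟩ := c
    rcases eq_or_ne (0 : ℕ) x with rfl | hx0
    · have hiff : MCTAlphaBelow F (0, y) ↔ MCTAlphaBelow F' (0, y) := by
        constructor <;> rintro ⟨i, h1, h2, ha⟩ <;> refine ⟨i, h1, h2, ?_⟩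
        · rw [← hoff i y (by omega) (by omega)]; exact ha
        · rw [hoff i y (by omega) (by omega)]; exact ha
      rw [hrow_det F hF y, hrow_det F' hF' y]
      simp only [hiff]
    · have hx : x ≠ 0 := hx0.symm
      rcases eq_or_ne (0 : ℕ) y with rfl | hy0
      · rw [hcol0 F hF x, hcol0 F' hF' x]
      · exact hoff x y hx hy0.symm
  have himg : res 0 '' mset W = mset w := by
    apply Set.Subset.antisymm
    · rintro _ ⟨F, hF, rfl⟩
      exact del_forward hW' hF (fun h => absurd h (lt_irrefl 0))
        (fun h => absurd h (lt_irrefl 0))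
    · intro G hG
      set P : ℕ × ℕ → Option MSymb := fun c =>
        if c.1 = 0 ∧ W[c.2]? = some Letter.E ∧
            (∀ i, i < c.2 - 1 → G (i, c.2 - 1) ≠ some MSymb.a)
          then some MSymb.a else none with hP
      have hl0y : ∀ y, lift 0 P G (0, y) =
          if W[y]? = some Letter.E ∧ (∀ i, i < y - 1 → G (i, y - 1) ≠ some MSymb.a)
            then some MSymb.a else none := by
        intro y
        rw [show lift 0 P G (0, y) = P (0, y) from if_pos (Or.inl rfl), hP]
        simp
      have hlx0 : ∀ x, x ≠ 0 → lift 0 P G (x, 0) = none := by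
        intro x hx
        rw [show lift 0 P G (x, 0) = P (x, 0) from if_pos (Or.inr rfl), hP]
        simp [hx]
      have hAB : ∀ y, y ≠ 0 →
          (MCTAlphaBelow (lift 0 P G) (0, y) ↔
            ∃ i, i < y - 1 ∧ G (i, y - 1) = some MSymb.a) := by
        intro y hy
        constructor
        · rintro ⟨i, h1, h2, ha⟩
          have hi : i ≠ 0 := by omega
          have ha2 : G (col 0 i, col 0 y) = some MSymb.a :=
            (lift_apply_off hi hy).symm.trans ha
          rw [col_zero hi, col_zero hy] at ha2
          exact ⟨i - 1, by omega, ha2⟩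
        · rintro ⟨i, h1, hGa⟩
          refine ⟨i + 1, by omega, by omega, ?_⟩
          have : lift 0 P G (i + 1, y) = G (col 0 (i + 1), col 0 y) :=
            lift_apply_off (by omega) hy
          rw [col_zero (by omega), col_zero hy] at this
          simpa using this.trans (by simpa using hGa)
      have hmem : IsMCT W (lift 0 P G) := by
        constructor
        · rintro ⟨x, y⟩ hc
          rcases eq_or_ne (0 : ℕ) x with rfl | hx0
          · rw [hl0y]
            split_ifs with h
            · exfalso
              have hy0 : y ≠ 0 := by
                intro hy; rw [hy, hW0] at h; exact absurd h.1 (by simp)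
              exact hc (mcell_iff.2 ⟨by omega, Or.inr hW0, Or.inl h.1⟩)
            · rfl
          · have hx : x ≠ 0 := hx0.symm
            rcases eq_or_ne (0 : ℕ) y with rfl | hy0
            · exact hlx0 x hx
            · have hy : y ≠ 0 := hy0.symm
              rw [show lift 0 P G (x, y) = G (col 0 x, col 0 y) from lift_apply_off hx hy]
              exact hG.support _ (fun h => hc ((lift_cell hW' hx hy).2 h))
        · rintro ⟨x, y⟩ h
          rcases eq_or_ne (0 : ℕ) x with rfl | hx0
          · rw [hl0y] at h
            split_ifs at h with hcond
            · exact hcond.1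
            all_goals simp at h
          · have hx : x ≠ 0 := hx0.symm
            rcases eq_or_ne (0 : ℕ) y with rfl | hy0
            · rw [hlx0 x hx] at h; simp at h
            · have hy : y ≠ 0 := hy0.symm
              rw [show lift 0 P G (x, y) = G (col 0 x, col 0 y) from lift_apply_off hx hy] at h
              have h2 := hG.alpha_col _ h
              rwa [hW', ins_col hy] at h2
        · rintro ⟨x, y⟩ h
          rcases eq_or_ne (0 : ℕ) x with rfl | hx0
          · rw [hl0y] at h; split_ifs at h <;> simp at h
          · have hx : x ≠ 0 := hx0.symm
            rcases eq_or_ne (0 : ℕ) y with rfl | hy0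
            · rw [hlx0 x hx] at h; simp at h
            · have hy : y ≠ 0 := hy0.symm
              rw [show lift 0 P G (x, y) = G (col 0 x, col 0 y) from lift_apply_off hx hy] at h
              have h2 := hG.beta_row _ h
              rwa [hW', ins_col hx] at h2
        · rintro ⟨x, y⟩ h ⟨k, h1, h2, hb⟩
          have hb : lift 0 P G (x, k) = some MSymb.b := hb
          have h1 : x < k := h1
          have h2 : k < y := h2
          rcases eq_or_ne (0 : ℕ) x with rfl | hx0
          · rw [hl0y] at hb; split_ifs at hb <;> simp at hb
          · have hx : x ≠ 0 := hx0.symm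
            rcases eq_or_ne (0 : ℕ) y with rfl | hy0
            · exact h (hlx0 x hx)
            · have hy : y ≠ 0 := hy0.symm
              have hk : k ≠ 0 := by omega
              rw [show lift 0 P G (x, y) = G (col 0 x, col 0 y) from lift_apply_off hx hy] at h
              exact hG.left_of_beta _ h ⟨col 0 k, col_lt_col hx hk h1,
                col_lt_col hk hy h2, (lift_apply_off hx hk).symm.trans hb⟩
        · rintro ⟨x, y⟩ h ⟨i, h1, h2, ha⟩
          have ha : lift 0 P G (i, y) = some MSymb.a := ha
          have h1 : x < i := h1
          have h2 : i < y := h2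
          rcases eq_or_ne (0 : ℕ) x with rfl | hx0
          · have hy : y ≠ 0 := by omega
            rw [hl0y] at h
            split_ifs at h with hcond
            · obtain ⟨i', hi', hGa⟩ := (hAB y hy).1 ⟨i, h1, h2, ha⟩
              exact hcond.2 i' hi' hGa
            · exact h rfl
          · have hx : x ≠ 0 := hx0.symm
            rcases eq_or_ne (0 : ℕ) y with rfl | hy0
            · exact h (hlx0 x hx)
            · have hy : y ≠ 0 := hy0.symm
              have hi : i ≠ 0 := by omega
              rw [show lift 0 P G (x, y) = G (col 0 x, col 0 y) from lift_apply_off hx hy] at h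
              exact hG.above_alpha _ h ⟨col 0 i, col_lt_col hx hi h1,
                col_lt_col hi hy h2, (lift_apply_off hi hy).symm.trans ha⟩
        · rintro ⟨x, y⟩ hc hx' hy' hbr har
          rcases eq_or_ne (0 : ℕ) x with rfl | hx0
          · rw [hW0] at hx'; simp at hx'
          · have hx : x ≠ 0 := hx0.symm
            rcases eq_or_ne (0 : ℕ) y with rfl | hy0
            · exact absurd hc.1 (by omega)
            · have hy : y ≠ 0 := hy0.symm
              rw [show lift 0 P G (x, y) = G (col 0 x, col 0 y) from lift_apply_off hx hy]
              refine hG.de_full (col 0 x, col 0 y) ((lift_cell hW' hx hy).1 hc) ?_ ?_ ?_ ?_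
              · show w[col 0 x]? = some Letter.D
                rw [hW', ins_col hx]; exact hx'
              · show w[col 0 y]? = some Letter.E
                rw [hW', ins_col hy]; exact hy'
              · exact fun hb => hbr ((lift_beta hx hy (fun hlt => absurd hlt (by omega))).2 hb)
              · exact fun ha => har ((lift_alpha hx hy (fun hlt => absurd hlt (by omega))).2 ha)
        · rintro ⟨x, y⟩ hc hx' hy' hbr har
          rcases eq_or_ne (0 : ℕ) x with rfl | hx0
          · rw [hW0] at hx'; simp at hx'
          · have hx : x ≠ 0 := hx0.symm
            rcases eq_or_ne (0 : ℕ) y with rfl | hy0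
            · exact absurd hc.1 (by omega)
            · have hy : y ≠ 0 := hy0.symm
              rw [show lift 0 P G (x, y) = G (col 0 x, col 0 y) from lift_apply_off hx hy]
              refine hG.da_full (col 0 x, col 0 y) ((lift_cell hW' hx hy).1 hc) ?_ ?_ ?_ ?_
              · show w[col 0 x]? = some Letter.D
                rw [hW', ins_col hx]; exact hx'
              · show w[col 0 y]? = some Letter.A
                rw [hW', ins_col hy]; exact hy'
              · exact fun hb => hbr ((lift_beta hx hy (fun hlt => absurd hlt (by omega))).2 hb)
              · exact fun ha => har ((lift_alpha hx hy (fun hlt => absurd hlt (by omega))).2 ha)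
        · rintro ⟨x, y⟩ hc hx' hy' hbr har
          rcases eq_or_ne (0 : ℕ) x with rfl | hx0
          · have hy : y ≠ 0 := by
              intro h0; rw [h0, hW0] at hy'; simp at hy'
            have hforall : ∀ i, i < y - 1 → G (i, y - 1) ≠ some MSymb.a := by
              intro i hi hGa
              exact har ((hAB y hy).2 ⟨i, hi, hGa⟩)
            rw [hl0y, if_pos ⟨hy', hforall⟩]
          · have hx : x ≠ 0 := hx0.symm
            rcases eq_or_ne (0 : ℕ) y with rfl | hy0
            · exact absurd hc.1 (by omega)
            · have hy : y ≠ 0 := hy0.symm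
              rw [show lift 0 P G (x, y) = G (col 0 x, col 0 y) from lift_apply_off hx hy]
              refine hG.ae_full (col 0 x, col 0 y) ((lift_cell hW' hx hy).1 hc) ?_ ?_ ?_ ?_
              · show w[col 0 x]? = some Letter.A
                rw [hW', ins_col hx]; exact hx'
              · show w[col 0 y]? = some Letter.E
                rw [hW', ins_col hy]; exact hy'
              · exact fun hb => hbr ((lift_beta hx hy (fun hlt => absurd hlt (by omega))).2 hb)
              · exact fun ha => har ((lift_alpha hx hy (fun hlt => absurd hlt (by omega))).2 ha)
      exact ⟨lift 0 P G, hmem, res_lift⟩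
  calc NW W = (res 0 '' mset W).ncard := (Set.ncard_image_of_injOn hinj).symm
    _ = NW w := by rw [himg]; rfl

end MCTaux
namespace MCTaux

lemma getRep (j : ℕ) (v : Word) (x : ℕ) :
    (List.replicate j Letter.D ++ v)[x]? = if x < j then some Letter.D else v[x - j]? := by
  have hl : (List.replicate j Letter.D).length = j := List.length_replicate
  rcases lt_or_ge x j with h | h
  · rw [List.getElem?_append_left (by rw [hl]; exact h), List.getElem?_replicate,
      if_pos h, if_pos h]
  · rw [List.getElem?_append_right (by rw [hl]; exact h), hl, if_neg (by omega)]

lemma repSucc (j : ℕ) (l : Word) :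
    List.replicate (j + 1) Letter.D ++ l = List.replicate j Letter.D ++ (Letter.D :: l) := by
  rw [List.replicate_succ', List.append_assoc]
  rfl

/-- A word of `D`'s only has exactly one (empty) tableau. -/
lemma NW_rep (j : ℕ) : NW (List.replicate j Letter.D) = 1 := by
  have hnocell : ∀ c, ¬MCTCell (List.replicate j Letter.D) c := by
    rintro ⟨x, y⟩ ⟨-, -, -, h⟩
    rcases h with h | h <;> rw [List.getElem?_replicate] at h <;> split_ifs at h <;> simp at h
  have hset : mset (List.replicate j Letter.D) = {fun _ => none} := by
    apply Set.eq_singleton_iff_unique_mem.mpr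
    constructor
    · constructor
      · intro c _; rfl
      · intro c h; simp at h
      · intro c h; simp at h
      · intro c h; exact absurd rfl h
      · intro c h; exact absurd rfl h
      · intro c hc; exact absurd hc (hnocell c)
      · intro c hc; exact absurd hc (hnocell c)
      · intro c hc; exact absurd hc (hnocell c)
    · intro F hF
      funext c
      exact hF.support c (hnocell c)
  rw [NW, hset, Set.ncard_singleton]

/-- The `DA = A` relation. -/
lemma NW_DA (j : ℕ) (w : Word) :
    NW (List.replicate j Letter.D ++ (Letter.A :: w)) = NW w := by
  induction j with
  | zero => simpa using NW_cons_A w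
  | succ t ih =>
    rw [repSucc]
    have hWe : ∀ x, (List.replicate t Letter.D ++ (Letter.D :: Letter.A :: w))[x]? =
        if x < t then some Letter.D else (Letter.D :: Letter.A :: w)[x - t]? :=
      fun x => getRep t _ x
    have hd : (List.replicate t Letter.D ++ (Letter.D :: Letter.A :: w))[t]? =
        some Letter.D := by
      rw [hWe, if_neg (by omega)]
      simp
    have hd1 : (List.replicate t Letter.D ++ (Letter.D :: Letter.A :: w))[t + 1]? =
        some Letter.A := by
      rw [hWe, if_neg (by omega), show t + 1 - t = 1 by omega]
      simp
    have hW' : ∀ x, (List.replicate t Letter.D ++ (Letter.A :: w))[x]? =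
        (List.replicate t Letter.D ++ (Letter.D :: Letter.A :: w))[ins t x]? := by
      intro x
      rw [getRep, hWe]
      by_cases h : x < t
      · rw [if_pos h, if_pos (show ins t x < t by unfold ins; split_ifs <;> omega)]
      · have h1 : ins t x = x + 1 := by unfold ins; split_ifs <;> omega
        rw [if_neg h, h1, if_neg (by omega), show x + 1 - t = (x - t) + 1 by omega,
          List.getElem?_cons_succ]
    have hfull : {F | IsMCT (List.replicate t Letter.D ++ (Letter.D :: Letter.A :: w)) F ∧
        F (t, t + 1) = some MSymb.b}
        = mset (List.replicate t Letter.D ++ (Letter.D :: Letter.A :: w)) := by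
      apply Set.Subset.antisymm
      · exact fun F hF => hF.1
      · intro F hF
        refine ⟨hF, hF.da_full (t, t + 1)
          (mcell_iff.2 ⟨by omega, Or.inl hd, Or.inr hd1⟩) hd hd1 ?_ ?_⟩
        · rintro ⟨k, h1, h2, -⟩; omega
        · rintro ⟨i, h1, h2, -⟩; omega
    have hcard := ncard_delRow hW' hd (Or.inr hd1)
    rw [hfull] at hcard
    exact hcard.trans ih

/-- The `DE = D + E` relation over a prefix of `D`'s. -/
lemma NW_DE (j : ℕ) (w : Word) :
    NW (List.replicate (j + 1) Letter.D ++ (Letter.E :: w))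
      = NW (List.replicate j Letter.D ++ (Letter.E :: w))
        + NW (List.replicate (j + 1) Letter.D ++ w) := by
  classical
  set W : Word := List.replicate (j + 1) Letter.D ++ (Letter.E :: w) with hWd
  have hWe : ∀ x, W[x]? = if x < j + 1 then some Letter.D else (Letter.E :: w)[x - (j + 1)]? :=
    fun x => getRep (j + 1) _ x
  have hd : W[j]? = some Letter.D := by rw [hWe, if_pos (by omega)]
  have hd1 : W[j + 1]? = some Letter.E := by
    rw [hWe, if_neg (by omega), show j + 1 - (j + 1) = 0 by omega]
    simp
  have hW1 : ∀ x, (List.replicate j Letter.D ++ (Letter.E :: w))[x]? = W[ins j x]? := by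
    intro x
    rw [getRep, hWe]
    by_cases h : x < j
    · rw [if_pos h, if_pos (show ins j x < j + 1 by unfold ins; split_ifs <;> omega)]
    · have h1 : ins j x = x + 1 := by unfold ins; split_ifs <;> omega
      rw [if_neg h, h1, if_neg (by omega), show x + 1 - (j + 1) = x - j by omega]
  have hW2 : ∀ x, (List.replicate (j + 1) Letter.D ++ w)[x]? = W[ins (j + 1) x]? := by
    intro x
    rw [getRep, hWe]
    by_cases h : x < j + 1
    · rw [if_pos h, if_pos (show ins (j + 1) x < j + 1 by unfold ins; split_ifs <;> omega)]
    · have h1 : ins (j + 1) x = x + 1 := by unfold ins; split_ifs <;> omega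
      rw [if_neg h, h1, if_neg (by omega),
        show x + 1 - (j + 1) = (x - (j + 1)) + 1 by omega, List.getElem?_cons_succ]
  have hcell0 : MCTCell W (j, j + 1) := mcell_iff.2 ⟨by omega, Or.inl hd, Or.inl hd1⟩
  set Sb : Set (ℕ × ℕ → Option MSymb) :=
    {F | IsMCT W F ∧ F (j, j + 1) = some MSymb.b} with hSb
  set Sa : Set (ℕ × ℕ → Option MSymb) :=
    {F | IsMCT W F ∧ F (j, j + 1) = some MSymb.a} with hSa
  have hunion : mset W = Sb ∪ Sa := by
    apply Set.Subset.antisymm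
    · intro F hF
      rcases hFv : F (j, j + 1) with - | v
      · exfalso
        refine hF.de_full (j, j + 1) hcell0 hd hd1 ?_ ?_ hFv
        · rintro ⟨k, h1, h2, -⟩; omega
        · rintro ⟨i, h1, h2, -⟩; omega
      · cases v
        · exact Or.inr ⟨hF, hFv⟩
        · exact Or.inl ⟨hF, hFv⟩
    · rintro F (⟨hF, -⟩ | ⟨hF, -⟩) <;> exact hF
  have hdisj : Disjoint Sb Sa := by
    rw [Set.disjoint_left]
    rintro F ⟨-, hb⟩ ⟨-, ha⟩
    rw [hb] at ha
    simp at ha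
  have hfin1 : Sb.Finite := (mset_finite W).subset (fun F hF => hF.1)
  have hfin2 : Sa.Finite := (mset_finite W).subset (fun F hF => hF.1)
  have : NW W = Sb.ncard + Sa.ncard := by
    rw [NW, hunion, Set.ncard_union_eq hdisj hfin1 hfin2]
  rw [this, ncard_delRow hW1 hd (Or.inl hd1), ncard_delCol hW2 (Or.inl hd) hd1]

/-- Iterated `DE = D + E` relation. -/
lemma NW_E (j : ℕ) (w : Word) :
    NW (List.replicate j Letter.D ++ (Letter.E :: w))
      = ∑ t ∈ Finset.range (j + 1), NW (List.replicate t Letter.D ++ w) := by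
  induction j with
  | zero => simpa using NW_cons_E w
  | succ t ih =>
    rw [NW_DE, ih]
    exact (Finset.sum_range_succ _ (t + 1)).symm

end MCTaux
namespace MCTaux

open Finset

/-- All words of length `n`. -/
def mwords : ℕ → Finset Word
  | 0 => {[]}
  | n + 1 => ((Finset.univ : Finset Letter) ×ˢ mwords n).image fun p => p.1 :: p.2

lemma mem_mwords : ∀ (n : ℕ) (w : Word), w ∈ mwords n ↔ w.length = n := by
  intro n
  induction n with
  | zero =>
    intro w
    simp only [mwords, Finset.mem_singleton, List.length_eq_zero_iff]
  | succ n ih =>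
    intro w
    constructor
    · intro hw
      simp only [mwords, Finset.mem_image] at hw
      obtain ⟨p, hp, rfl⟩ := hw
      simp only [Finset.mem_product] at hp
      simp [(ih p.2).1 hp.2]
    · intro hw
      cases w with
      | nil => simp at hw
      | cons a l =>
        simp only [List.length_cons] at hw
        have hl : l ∈ mwords n := (ih l).2 (by omega)
        simp only [mwords, Finset.mem_image]
        exact ⟨(a, l), by simp [hl], rfl⟩

/-- Words of length `n` with `r` letters `A`, as a `Finset`. -/
def SF (n r : ℕ) : Finset Word := (mwords n).filter fun w => w.count Letter.A = r

lemma coe_SF (n r : ℕ) : stateSpace n r = ↑(SF n r) := by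
  ext w
  simp [stateSpace, SF, mem_mwords]

lemma SF_empty {n r : ℕ} (h : n < r) : SF n r = ∅ := by
  apply Finset.filter_eq_empty_iff.mpr
  intro w hw
  have hc := List.count_le_length (a := Letter.A) (l := w)
  rw [mem_mwords] at hw
  omega

lemma SF_zero : SF 0 0 = {[]} := by
  ext w
  simp only [SF, mwords, Finset.mem_filter, Finset.mem_singleton]
  constructor
  · rintro ⟨h, -⟩; exact h
  · rintro rfl; exact ⟨rfl, rfl⟩

lemma count_cons_D (w : Word) : (Letter.D :: w).count Letter.A = w.count Letter.A := by
  simp [List.count_cons]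
lemma count_cons_E (w : Word) : (Letter.E :: w).count Letter.A = w.count Letter.A := by
  simp [List.count_cons]
lemma count_cons_A (w : Word) : (Letter.A :: w).count Letter.A = w.count Letter.A + 1 := by
  simp [List.count_cons]

lemma sum_SF_succ (f : Word → ℕ) (n r : ℕ) :
    ∑ w ∈ SF (n + 1) r, f w
      = (∑ w ∈ SF n r, f (Letter.D :: w)) + (∑ w ∈ SF n r, f (Letter.E :: w))
        + (if r = 0 then 0 else ∑ w ∈ SF n (r - 1), f (Letter.A :: w)) := by
  classical
  have h1 : ∑ w ∈ SF (n + 1) r, f w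
      = ∑ p ∈ ((Finset.univ : Finset Letter) ×ˢ mwords n),
          (if (p.1 :: p.2).count Letter.A = r then f (p.1 :: p.2) else 0) := by
    rw [SF, Finset.sum_filter,
      show mwords (n + 1)
        = ((Finset.univ : Finset Letter) ×ˢ mwords n).image (fun p => p.1 :: p.2) from rfl]
    rw [Finset.sum_image]
    rintro ⟨a, l⟩ - ⟨b, m⟩ - h
    injection h with h1 h2
    subst h1; subst h2; rfl
  rw [h1, Finset.sum_product,
    show (Finset.univ : Finset Letter) = {Letter.D, Letter.A, Letter.E} from rfl,
    Finset.sum_insert (by decide), Finset.sum_insert (by decide), Finset.sum_singleton]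
  have hD : ∑ w ∈ mwords n, (if (Letter.D :: w).count Letter.A = r then f (Letter.D :: w) else 0)
      = ∑ w ∈ SF n r, f (Letter.D :: w) := by
    rw [SF, Finset.sum_filter]
    exact Finset.sum_congr rfl fun w _ => by rw [count_cons_D]
  have hE : ∑ w ∈ mwords n, (if (Letter.E :: w).count Letter.A = r then f (Letter.E :: w) else 0)
      = ∑ w ∈ SF n r, f (Letter.E :: w) := by
    rw [SF, Finset.sum_filter]
    exact Finset.sum_congr rfl fun w _ => by rw [count_cons_E]
  have hA : ∑ w ∈ mwords n, (if (Letter.A :: w).count Letter.A = r then f (Letter.A :: w) else 0)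
      = (if r = 0 then 0 else ∑ w ∈ SF n (r - 1), f (Letter.A :: w)) := by
    rcases Nat.eq_zero_or_pos r with rfl | hr
    · rw [if_pos rfl]
      apply Finset.sum_eq_zero
      intro w _
      rw [count_cons_A, if_neg (by omega)]
    · rw [if_neg (by omega), SF, Finset.sum_filter]
      apply Finset.sum_congr rfl
      intro w _
      rw [count_cons_A]
      congr 1
      apply propext
      constructor <;> intro h <;> omega
  rw [hD, hE, hA]
  ring

/-- The master sum: the number of multi-Catalan tableaux of types `D^j · w`
summed over all words `w` of length `n` with `r` `A`'s. -/
def Y (n j r : ℕ) : ℕ := ∑ w ∈ SF n r, NW (List.replicate j Letter.D ++ w)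

lemma Y_gt {n r : ℕ} (j : ℕ) (h : n < r) : Y n j r = 0 := by
  simp [Y, SF_empty h]

lemma Y_base (j : ℕ) : Y 0 j 0 = 1 := by
  rw [Y, SF_zero, Finset.sum_singleton, List.append_nil, NW_rep]

lemma Y_succ (n j r : ℕ) :
    Y (n + 1) j r = Y n (j + 1) r + (∑ t ∈ Finset.range (j + 1), Y n t r)
      + (if r = 0 then 0 else Y n 0 (r - 1)) := by
  rw [Y, sum_SF_succ]
  congr 1
  congr 1
  · exact Finset.sum_congr rfl fun w _ => by rw [← repSucc]
  · calc ∑ w ∈ SF n r, NW (List.replicate j Letter.D ++ (Letter.E :: w))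
        = ∑ w ∈ SF n r, ∑ t ∈ Finset.range (j + 1), NW (List.replicate t Letter.D ++ w) :=
          Finset.sum_congr rfl fun w _ => NW_E j w
      _ = ∑ t ∈ Finset.range (j + 1), Y n t r := Finset.sum_comm
  · split_ifs with h
    · rfl
    · calc ∑ w ∈ SF n (r - 1), NW (List.replicate j Letter.D ++ (Letter.A :: w))
          = ∑ w ∈ SF n (r - 1), NW w := Finset.sum_congr rfl fun w _ => NW_DA j w
        _ = Y n 0 (r - 1) := Finset.sum_congr rfl fun w _ => by simp

/-! ### Ballot numbers -/

/-- The ballot-type difference of binomial coefficients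
`C(N, k) - C(N, k-1)` (equal to `1` for `k = 0`). -/
def Dk : ℕ → ℕ → ℤ
  | _, 0 => 1
  | N, k + 1 => (N.choose (k + 1) : ℤ) - (N.choose k : ℤ)

lemma Dk_pascal (N k : ℕ) : Dk (N + 1) (k + 1) = Dk N (k + 1) + Dk N k := by
  cases k with
  | zero =>
    show ((N + 1).choose 1 : ℤ) - ((N + 1).choose 0 : ℤ)
      = ((N.choose 1 : ℤ) - (N.choose 0 : ℤ)) + 1
    rw [Nat.choose_one_right, Nat.choose_one_right, Nat.choose_zero_right,
      Nat.choose_zero_right]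
    push_cast
    ring
  | succ m =>
    simp only [Dk]
    rw [Nat.choose_succ_succ N (m + 1), Nat.choose_succ_succ N m]
    push_cast
    ring

lemma Dk_mid (n : ℕ) : Dk (2 * n + 1) (n + 1) = 0 := by
  have h := Nat.choose_symm (n := 2 * n + 1) (k := n + 1) (by omega)
  rw [show 2 * n + 1 - (n + 1) = n by omega] at h
  simp only [Dk]
  rw [← h]
  ring

lemma Dk_id (M k : ℕ) : ∀ j : ℕ,
    Dk (M + j + 2) (k + 1)
      = Dk (M + j + 1) k + Dk M (k + 1) + ∑ t ∈ Finset.range (j + 1), Dk (M + t) k := by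
  intro j
  induction j with
  | zero =>
    rw [Finset.sum_range_one,
      show M + 0 + 2 = (M + 1) + 1 by omega, Dk_pascal, Dk_pascal,
      show M + 0 + 1 = M + 1 by omega, show M + 0 = M by omega]
    ring
  | succ i ih =>
    have hs : ∑ t ∈ Finset.range (i + 1 + 1), Dk (M + t) k
        = (∑ t ∈ Finset.range (i + 1), Dk (M + t) k) + Dk (M + (i + 1)) k :=
      Finset.sum_range_succ _ _
    rw [show M + (i + 1) + 2 = (M + i + 2) + 1 by omega, Dk_pascal, ih, hs,
      show M + (i + 1) + 1 = M + i + 2 by omega,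
      show M + (i + 1) = M + i + 1 by omega]
    ring

lemma Y_formula : ∀ n j r : ℕ, r ≤ n → (Y n j r : ℤ) = Dk (2 * n + j + 1) (n - r) := by
  intro n
  induction n with
  | zero =>
    intro j r hr
    have h0 : r = 0 := by omega
    subst h0
    rw [Y_base]
    norm_num [Dk]
  | succ n ih =>
    intro j r hr
    rcases eq_or_lt_of_le hr with h | hlt
    · -- r = n + 1
      subst h
      rw [Y_succ, Y_gt (j + 1) (by omega), if_neg (by omega),
        Finset.sum_eq_zero (fun t _ => Y_gt t (by omega))]
      rw [show n + 1 - 1 = n by omega, Nat.sub_self]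
      have h1 : (Y n 0 n : ℤ) = 1 := by
        rw [ih 0 n le_rfl, Nat.sub_self]; rfl
      push_cast
      rw [h1]
      norm_num [Dk]
    · -- r ≤ n
      have hrn : r ≤ n := by omega
      have hA : (if r = 0 then (0 : ℤ) else (Y n 0 (r - 1) : ℤ))
          = Dk (2 * n + 1) ((n - r) + 1) := by
        rcases Nat.eq_zero_or_pos r with rfl | hrpos
        · rw [if_pos rfl, Nat.sub_zero, Dk_mid]
        · rw [if_neg (by omega), ih 0 (r - 1) (by omega),
            show 2 * n + 0 + 1 = 2 * n + 1 by omega,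
            show n - (r - 1) = (n - r) + 1 by omega]
      have hsum : ((∑ t ∈ Finset.range (j + 1), Y n t r : ℕ) : ℤ)
          = ∑ t ∈ Finset.range (j + 1), Dk ((2 * n + 1) + t) (n - r) := by
        push_cast
        apply Finset.sum_congr rfl
        intro t _
        rw [ih t r hrn, show 2 * n + t + 1 = 2 * n + 1 + t by omega]
      have hD : (Y n (j + 1) r : ℤ) = Dk ((2 * n + 1) + j + 1) (n - r) := by
        rw [ih (j + 1) r hrn, show 2 * n + (j + 1) + 1 = 2 * n + 1 + j + 1 by omega]
      have hid := Dk_id (2 * n + 1) (n - r) j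
      rw [Y_succ]
      push_cast
      rw [hD, hA, show (∑ x ∈ Finset.range (j + 1), (Y n x r : ℤ))
          = ∑ t ∈ Finset.range (j + 1), Dk ((2 * n + 1) + t) (n - r) from by
          rw [← hsum]; push_cast; rfl]
      rw [show 2 * (n + 1) + j + 1 = (2 * n + 1) + j + 2 by omega,
        show (n + 1) - r = (n - r) + 1 by omega, hid]
      ring

end MCTaux
/-- The number of multi-Catalan tableaux of size `n` whose
type has `r` `A`'s is `(2(r+1)/(n+r+2)) C(2n+1, n-r)`. -/
theorem mct_count (n r : ℕ) (hrn : r ≤ n) :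
    ((∑ᶠ u ∈ stateSpace n r, Set.ncard {F | IsMCT u F} : ℕ) : ℚ) =
      2 * ((r : ℚ) + 1) / ((n : ℚ) + (r : ℚ) + 2) * (((2 * n + 1).choose (n - r) : ℚ)) := by
  classical
  have h1 : (∑ᶠ u ∈ stateSpace n r, Set.ncard {F | IsMCT u F} : ℕ) = MCTaux.Y n 0 r := by
    rw [MCTaux.coe_SF, finsum_mem_coe_finset]
    apply Finset.sum_congr rfl
    intro w _
    rw [show (List.replicate 0 Letter.D ++ w) = w by simp]
    rfl
  have h2 := MCTaux.Y_formula n 0 r hrn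
  rw [show 2 * n + 0 + 1 = 2 * n + 1 by omega] at h2
  have hq : ((MCTaux.Y n 0 r : ℕ) : ℚ) = ((MCTaux.Dk (2 * n + 1) (n - r) : ℤ) : ℚ) := by
    exact_mod_cast h2
  rw [h1, hq]
  have hne : (n : ℚ) + r + 2 ≠ 0 := by positivity
  cases hk : n - r with
  | zero =>
    have hrn' : r = n := by omega
    subst hrn'
    rw [Nat.choose_zero_right]
    show ((1 : ℤ) : ℚ) = _
    push_cast
    field_simp
    ring
  | succ k =>
    have hch := Nat.choose_succ_right_eq (2 * n + 1) k
    rw [show 2 * n + 1 - k = n + r + 2 by omega] at hch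
    have hchq : ((2 * n + 1).choose (k + 1) : ℚ) * ((k : ℚ) + 1)
        = ((2 * n + 1).choose k : ℚ) * ((n : ℚ) + r + 2) := by
      exact_mod_cast hch
    have hk1 : (k : ℚ) + 1 = (n : ℚ) - r := by
      have : ((n - r : ℕ) : ℚ) = (n : ℚ) - r := by
        rw [Nat.cast_sub hrn]
      rw [← this, hk]
      push_cast
      ring
    have hDkval : ((MCTaux.Dk (2 * n + 1) (k + 1) : ℤ) : ℚ)
        = ((2 * n + 1).choose (k + 1) : ℚ) - ((2 * n + 1).choose k : ℚ) := by
      show ((((2 * n + 1).choose (k + 1) : ℤ) - ((2 * n + 1).choose k : ℤ) : ℤ) : ℚ) = _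
      push_cast
      ring
    rw [hDkval]
    field_simp
    linear_combination hchq - (((2 * n + 1).choose (k + 1) : ℚ)) * hk1
end
end

section
/- For all integers 0 ≤ r ≤ n: Σ_{k=0}^{n−r} [(r+1)/(n+1)] · C(n+1, k) · C(n+1, n−r−k) = [2(r+1)/(n+r+2)] · C(2n+1, n−r), as an identity of rational numbers. -/
open scoped Classical

noncomputable section

lemma vand (n m : ℕ) :
    ∑ k ∈ Finset.range (m + 1), (n + 1).choose k * (n + 1).choose (m - k)
      = (2 * n + 2).choose m := by
  have := Nat.add_choose_eq (n + 1) (n + 1) m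
  rw [Finset.Nat.sum_antidiagonal_eq_sum_range_succ
    (fun x y => (n + 1).choose x * (n + 1).choose y) m] at this
  rw [← this]; ring_nf

/-- For all `0 ≤ r ≤ n`,
`Σ_{k=0}^{n-r} ((r+1)/(n+1)) C(n+1, k) C(n+1, n-r-k)
  = (2(r+1)/(n+r+2)) C(2n+1, n-r)`. -/
theorem mct_consistency_counts (n r : ℕ) (hrn : r ≤ n) :
    (∑ k ∈ Finset.range (n - r + 1),
        ((r : ℚ) + 1) / ((n : ℚ) + 1) * (((n + 1).choose k : ℚ)) *
          (((n + 1).choose (n - r - k) : ℚ))) =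
      2 * ((r : ℚ) + 1) / ((n : ℚ) + (r : ℚ) + 2) * (((2 * n + 1).choose (n - r) : ℚ)) := by
  have hsum : (∑ k ∈ Finset.range (n - r + 1),
      ((r : ℚ) + 1) / ((n : ℚ) + 1) * (((n + 1).choose k : ℚ)) *
        (((n + 1).choose (n - r - k) : ℚ)))
      = ((r : ℚ) + 1) / ((n : ℚ) + 1) * (((2 * n + 2).choose (n - r) : ℚ)) := by
    rw [← vand n (n - r)]
    push_cast [Finset.mul_sum]
    apply Finset.sum_congr rfl
    intro k _; ring
  rw [hsum]
  have hkey : ((2 * n + 1).choose (n - r) : ℚ) * (2 * n + 2)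
      = ((2 * n + 2).choose (n - r) : ℚ) * ((n : ℚ) + (r : ℚ) + 2) := by
    have h := Nat.choose_mul_succ_eq (2 * n + 1) (n - r)
    have hsub : 2 * n + 1 + 1 - (n - r) = n + r + 2 := by omega
    rw [hsub] at h
    have := congrArg (fun x : ℕ => (x : ℚ)) h
    push_cast at this
    convert this using 2 <;> push_cast <;> ring
  have h1 : (n : ℚ) + 1 ≠ 0 := by positivity
  have h2 : (n : ℚ) + (r : ℚ) + 2 ≠ 0 := by positivity
  field_simp
  linear_combination (-1 : ℚ) * hkey
end
end
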